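/- Let g, N ∈ ℕ with g ≥ 1, σ_ε > 0, K_x > 0, and t > 0. Let X ∈ ℝ^{N×g} be a fixed matrix whose columns satisfy ‖X_{:,j}‖₂² ≤ K_x · N for every j ∈ {1,…,g}. Let Z be an N×g random matrix whose entries are independent Gaussian random variables with mean 0 and variance σ_ε². Then with probability at least 1 − 2·exp(−t²/2), one has max_{1≤i,j≤g} |[ZᵀX]_{i,j}| / N ≤ σ_ε · √(K_x(t² + 4·log g)/N). -/

import Mathlib

open MeasureTheory ProbabilityTheory Matrix Real
open scoped NNReal ENNReal

section Aux

lemma gauss_arg_eq' (m : ℝ) (v : ℝ≥0) (hv' : (0:ℝ) < v) (b x : ℝ) :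
    b * x + -(x - m)^2/(2*(v:ℝ)) = (b*m + b^2*(v:ℝ)/2) + (-(2*(v:ℝ))⁻¹ * (x-(m+b*(v:ℝ)))^2) := by
  field_simp
  ring

lemma gauss_exp_integrable (m : ℝ) (v : ℝ≥0) (b : ℝ) :
    Integrable (fun x => Real.exp (b * x)) (gaussianReal m v) := by
  by_cases hv : v = 0
  · rw [hv, gaussianReal_zero_var]
    refine (integrable_const (Real.exp (b * m))).congr ?_
    rw [Filter.eventuallyEq_iff_exists_mem]
    exact ⟨{m}, by simp [MeasureTheory.ae_dirac_eq], fun x hx => by simp at hx; simp [hx]⟩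
  · rw [gaussianReal_of_var_ne_zero _ hv, gaussianPDF_def,
      integrable_withDensity_iff (measurable_gaussianPDFReal m v).ennreal_ofReal
        (.of_forall fun _ => ENNReal.ofReal_lt_top)]
    have hv' : (0:ℝ) < v := lt_of_le_of_ne v.2 (by exact_mod_cast Ne.symm hv)
    have key : ∀ x : ℝ, Real.exp (b * x) * (ENNReal.ofReal (gaussianPDFReal m v x)).toReal
        = ((Real.sqrt (2 * π * (v:ℝ)))⁻¹ * Real.exp (b * m + b^2 * (v:ℝ) / 2)) *
          Real.exp (-(2*(v:ℝ))⁻¹ * (x - (m + b * (v:ℝ)))^2) := by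
      intro x
      rw [ENNReal.toReal_ofReal (gaussianPDFReal_nonneg m v x), gaussianPDFReal]
      rw [show Real.exp (b*x) * ((Real.sqrt (2*π*(v:ℝ)))⁻¹ * Real.exp (-(x-m)^2/(2*(v:ℝ))))
          = (Real.sqrt (2*π*(v:ℝ)))⁻¹ * Real.exp (b*x + -(x-m)^2/(2*(v:ℝ))) by
        rw [Real.exp_add]; ring]
      rw [gauss_arg_eq' m v hv' b x, Real.exp_add]
      ring
    simp only [key]
    refine Integrable.const_mul ?_ _
    have : Integrable (fun x : ℝ => Real.exp (-(2*(v:ℝ))⁻¹ * x ^ 2)) :=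
      integrable_exp_neg_mul_sq (by positivity)
    simpa using this.comp_sub_right (m + b * (v:ℝ))

lemma gauss_exp_integral (m : ℝ) (v : ℝ≥0) (b : ℝ) :
    ∫ x, Real.exp (b * x) ∂(gaussianReal m v) = Real.exp (b * m + b^2 * (v:ℝ) / 2) := by
  by_cases hv : v = 0
  · rw [hv, gaussianReal_zero_var, integral_dirac]
    simp
  · rw [gaussianReal_of_var_ne_zero _ hv, gaussianPDF_def]
    have hv' : (0:ℝ) < v := lt_of_le_of_ne v.2 (by exact_mod_cast Ne.symm hv)
    rw [show (fun x => ENNReal.ofReal (gaussianPDFReal m v x))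
        = fun x => ((gaussianPDFReal m v x).toNNReal : ℝ≥0∞) from rfl,
      integral_withDensity_eq_integral_smul (measurable_gaussianPDFReal m v).real_toNNReal _]
    have key : ∀ x : ℝ, (Real.toNNReal (gaussianPDFReal m v x)) • Real.exp (b * x)
        = (Real.exp (b * m + b^2 * (v:ℝ) / 2) * (Real.sqrt (2 * π * (v:ℝ)))⁻¹) *
          Real.exp (-(2*(v:ℝ))⁻¹ * (x - (m + b * (v:ℝ)))^2) := by
      intro x
      rw [NNReal.smul_def, smul_eq_mul, Real.coe_toNNReal _ (gaussianPDFReal_nonneg m v x),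
        gaussianPDFReal]
      rw [show (Real.sqrt (2*π*(v:ℝ)))⁻¹ * Real.exp (-(x-m)^2/(2*(v:ℝ))) * Real.exp (b*x)
          = (Real.sqrt (2*π*(v:ℝ)))⁻¹ * Real.exp (b*x + -(x-m)^2/(2*(v:ℝ))) by
        rw [Real.exp_add]; ring]
      rw [gauss_arg_eq' m v hv' b x, Real.exp_add]
      ring
    simp only [key]
    rw [integral_const_mul]
    have h1 : ∫ x : ℝ, Real.exp (-(2*(v:ℝ))⁻¹ * (x - (m + b*(v:ℝ)))^2)
        = ∫ x : ℝ, Real.exp (-(2*(v:ℝ))⁻¹ * x^2) :=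
      integral_sub_right_eq_self (μ := volume)
        (fun x => Real.exp (-(2*(v:ℝ))⁻¹ * x^2)) (m + b*(v:ℝ))
    rw [h1, integral_gaussian]
    rw [mul_assoc]
    have h2 : Real.sqrt (π / (2*(v:ℝ))⁻¹) = Real.sqrt (2 * π * (v:ℝ)) := by
      congr 1
      field_simp
    rw [h2, inv_mul_cancel₀ (by positivity), mul_one]

lemma exp_integrable_of_gauss {Ω : Type*} [MeasurableSpace Ω] {P : Measure Ω} {W : Ω → ℝ}
    {m : ℝ} {v : ℝ≥0} (hW : Measure.map W P = gaussianReal m v) (b : ℝ) :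
    Integrable (fun ω => Real.exp (b * W ω)) P := by
  have hWae : AEMeasurable W P := aemeasurable_of_map_neZero (by rw [hW]; infer_instance)
  exact (integrable_map_measure (g := fun x => Real.exp (b * x))
    (measurable_const.mul measurable_id').exp.aestronglyMeasurable hWae).mp
    (by rw [hW]; exact gauss_exp_integrable m v b)

lemma mgf_of_gauss {Ω : Type*} [MeasurableSpace Ω] {P : Measure Ω} {W : Ω → ℝ}
    {m : ℝ} {v : ℝ≥0} (hW : Measure.map W P = gaussianReal m v) (b : ℝ) :
    mgf W P b = Real.exp (b * m + b^2 * (v:ℝ) / 2) := by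
  have hWae : AEMeasurable W P := aemeasurable_of_map_neZero (by rw [hW]; infer_instance)
  rw [mgf]
  show ∫ x, Real.exp (b * W x) ∂P = _
  rw [← integral_map (f := fun x => Real.exp (b * x)) hWae
      (measurable_const.mul measurable_id').exp.aestronglyMeasurable,
    hW, gauss_exp_integral]

lemma iIndepFun_ae_eq' {Ω ι : Type*} [MeasurableSpace Ω] {P : Measure Ω} {f f' : ι → Ω → ℝ}
    (hf : iIndepFun f P) (h : ∀ i, f i =ᵐ[P] f' i) :
    iIndepFun f' P := by
  rw [iIndepFun_iff_measure_inter_preimage_eq_mul] at hf ⊢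
  intro S sets hsets
  have hpre : ∀ i, (f' i ⁻¹' sets i : Set Ω) =ᵐ[P] f i ⁻¹' sets i :=
    fun i => ((h i).symm.fun_comp (· ∈ sets i))
  have h2 : ((⋂ i ∈ S, f' i ⁻¹' sets i : Set Ω)) =ᵐ[P] ⋂ i ∈ S, f i ⁻¹' sets i :=
    EventuallyEq.countable_bInter (l := MeasureTheory.ae P) S.countable_toSet
      (fun i _ => hpre i)
  rw [measure_congr h2, hf S hsets]
  exact Finset.prod_congr rfl fun i _ => (measure_congr (hpre i)).symm

lemma chernoff_gauss {Ω : Type*} [MeasurableSpace Ω] (P : Measure Ω) [IsProbabilityMeasure P]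
    {S : Ω → ℝ} {V₀ V s : ℝ} (hV : V₀ ≤ V) (hVpos : 0 < V) (hs : 0 ≤ s)
    (hmgf : ∀ b : ℝ, mgf S P b = Real.exp (b^2 * V₀ / 2))
    (hint : ∀ b : ℝ, Integrable (fun ω => Real.exp (b * S ω)) P) :
    (P {ω | s ≤ S ω}).toReal ≤ Real.exp (-(s^2) / (2*V)) ∧
    (P {ω | S ω ≤ -s}).toReal ≤ Real.exp (-(s^2) / (2*V)) := by
  set b := s / V with hb_def
  have hb : 0 ≤ b := div_nonneg hs hVpos.le
  have hexp : Real.exp (-b * s) * Real.exp (b^2 * V₀ / 2) ≤ Real.exp (-(s^2) / (2*V)) := by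
    rw [← Real.exp_add, Real.exp_le_exp]
    have h1 : b^2 * V₀ / 2 ≤ b^2 * V / 2 := by nlinarith [sq_nonneg b]
    have h2 : -b * s + b^2 * V / 2 = -(s^2) / (2*V) := by
      rw [hb_def]
      field_simp
      ring
    linarith
  constructor
  · refine le_trans ?_ hexp
    have := measure_ge_le_exp_mul_mgf (μ := P) (X := S) s hb (hint b)
    rwa [hmgf b] at this
  · refine le_trans ?_ hexp
    have := measure_le_le_exp_mul_mgf (μ := P) (X := S) (-s) (t := -b)
      (neg_nonpos.mpr hb) (hint (-b))
    rw [hmgf (-b)] at this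
    simpa [measureReal_def] using this

end Aux


/-- for a fixed matrix `X ∈ ℝ^{N×g}` with columns of squared norm at most
`K_x N`, and a random matrix `Z` with independent `N(0, σ_ε²)` entries, with probability at
least `1 − 2 exp(−t²/2)` one has
`max_{i,j} |[ZᵀX]_{i,j}| / N ≤ σ_ε √(K_x (t² + 4 log g) / N)`. -/
theorem stmt11
    {Ω : Type*} [MeasurableSpace Ω] (P : Measure Ω) [IsProbabilityMeasure P]
    (g N : ℕ) (hg : 1 ≤ g)
    (σe Kx t : ℝ) (hσ : 0 < σe) (hK : 0 < Kx) (ht : 0 < t)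
    (X : Matrix (Fin N) (Fin g) ℝ)
    (hX : ∀ j, ∑ i, (X i j) ^ 2 ≤ Kx * N)
    (Z : Ω → Matrix (Fin N) (Fin g) ℝ)
    (hZindep : iIndepFun
      (fun (p : Fin N × Fin g) ω => Z ω p.1 p.2) P)
    (hZgauss : ∀ i j,
      Measure.map (fun ω => Z ω i j) P = gaussianReal 0 (Real.toNNReal (σe ^ 2))) :
    ENNReal.ofReal (1 - 2 * Real.exp (-t ^ 2 / 2)) ≤
      P {ω | ∀ i j : Fin g, |((Z ω)ᵀ * X) i j| / N
        ≤ σe * Real.sqrt (Kx * (t ^ 2 + 4 * Real.log g) / N)} := by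
  classical
  -- trivial case N = 0
  rcases Nat.eq_zero_or_pos N with hN0 | hNpos
  · subst hN0
    have hset : {ω | ∀ i j : Fin g, |((Z ω)ᵀ * X) i j| / (0:ℕ)
        ≤ σe * Real.sqrt (Kx * (t ^ 2 + 4 * Real.log g) / (0:ℕ))} = Set.univ := by
      ext ω
      simp only [Set.mem_setOf_eq, Set.mem_univ, iff_true]
      intro i j
      have h0 : ((Z ω)ᵀ * X) i j = 0 := by
        simp [Matrix.mul_apply]
      simp [h0]
    rw [hset, measure_univ]
    exact ENNReal.ofReal_le_one.mpr (by nlinarith [Real.exp_pos (-t^2/2)])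
  -- main case
  have hNr : (0:ℝ) < N := by exact_mod_cast hNpos
  have hGr : (0:ℝ) < g := by exact_mod_cast hg
  set G : ℝ := (g:ℝ) with hG_def
  set v : ℝ≥0 := Real.toNNReal (σe ^ 2) with hv_def
  have hv : (v:ℝ) = σe^2 := Real.coe_toNNReal _ (sq_nonneg σe)
  set r : ℝ := t ^ 2 + 4 * Real.log g with hr_def
  have hlogg : 0 ≤ Real.log g := Real.log_nonneg (by exact_mod_cast hg)
  have hr : 0 < r := by positivity
  set s : ℝ := (N:ℝ) * (σe * Real.sqrt (Kx * r / N)) with hs_def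
  have hs_nonneg : 0 ≤ s := by positivity
  have hs2 : s^2 = (N:ℝ) * (σe^2 * (Kx * r)) := by
    rw [hs_def, mul_pow, mul_pow, Real.sq_sqrt (by positivity)]
    field_simp
  -- measurable versions of the entries
  have hZae : ∀ p : Fin N × Fin g, AEMeasurable (fun ω => Z ω p.1 p.2) P := fun p =>
    aemeasurable_of_map_neZero (by rw [hZgauss p.1 p.2]; infer_instance)
  set W : Fin N × Fin g → Ω → ℝ := fun p => (hZae p).mk _ with hW_def
  have hWmeas : ∀ p, Measurable (W p) := fun p => (hZae p).measurable_mk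
  have hWeq : ∀ p, (fun ω => Z ω p.1 p.2) =ᵐ[P] W p := fun p => (hZae p).ae_eq_mk
  have hWgauss : ∀ p, Measure.map (W p) P = gaussianReal 0 v := fun p => by
    rw [← Measure.map_congr (hWeq p), hZgauss]
  have hWindep : iIndepFun W P :=
    iIndepFun_ae_eq' hZindep hWeq
  -- the per-entry sums
  set S : Fin g → Fin g → Ω → ℝ :=
    fun i j ω => ∑ k, W (k, i) ω * X k j with hS_def
  have hSmeas : ∀ i j, Measurable (S i j) := fun i j =>
    Finset.measurable_sum _ fun k _ => (hWmeas (k, i)).mul_const _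
  -- Chernoff bound for each entry
  have key : ∀ i j : Fin g,
      (P {ω | s ≤ S i j ω}).toReal ≤ Real.exp (-(s^2) / (2 * (σe^2 * (Kx * N)))) ∧
      (P {ω | S i j ω ≤ -s}).toReal ≤ Real.exp (-(s^2) / (2 * (σe^2 * (Kx * N)))) := by
    intro i j
    set c : Fin N × Fin g → ℝ := fun p => if p.2 = i then X p.1 j else 0 with hc_def
    set Y : Fin N × Fin g → Ω → ℝ := fun p ω => c p * W p ω with hY_def
    have hYgauss : ∀ p, Measure.map (Y p) P
        = gaussianReal 0 (⟨(c p)^2, sq_nonneg _⟩ * v) := by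
      intro p
      have : Y p = (fun x => c p * x) ∘ W p := rfl
      rw [this, ← Measure.map_map (measurable_const_mul _) (hWmeas p), hWgauss,
        gaussianReal_map_const_mul]
      norm_num
      rfl
    have hYmeas : ∀ p, Measurable (Y p) := fun p => (hWmeas p).const_mul _
    have hYindep : iIndepFun Y P :=
      hWindep.comp (fun p x => c p * x) (fun p => measurable_const_mul _)
    have hSY : S i j = ∑ p : Fin N × Fin g, Y p := by
      funext ω
      rw [Finset.sum_apply]
      rw [hS_def]
      simp only [hY_def, hc_def]
      rw [Fintype.sum_prod_type_right]
      simp [Finset.sum_ite_eq, mul_comm]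
    have hcsum : ∑ p : Fin N × Fin g, (c p)^2 = ∑ k, (X k j)^2 := by
      rw [Fintype.sum_prod_type_right]
      simp [hc_def, apply_ite (·^2), Finset.sum_ite_eq]
    have hint : ∀ b : ℝ, Integrable (fun ω => Real.exp (b * S i j ω)) P := by
      intro b
      have := hYindep.integrable_exp_mul_sum (t := b) hYmeas
        (s := Finset.univ) (fun p _ => exp_integrable_of_gauss (hYgauss p) b)
      rw [hSY]
      exact this
    have hmgf : ∀ b : ℝ, mgf (S i j) P b
        = Real.exp (b^2 * (σe^2 * ∑ k, (X k j)^2) / 2) := by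
      intro b
      rw [hSY, hYindep.mgf_sum hYmeas]
      have : ∀ p : Fin N × Fin g, mgf (Y p) P b
          = Real.exp (b^2 * ((c p)^2 * σe^2) / 2) := by
        intro p
        rw [mgf_of_gauss (hYgauss p)]
        rw [show ((⟨(c p)^2, sq_nonneg _⟩ * v : ℝ≥0) : ℝ) = (c p)^2 * σe^2 from by
          show (c p)^2 * (v:ℝ) = _; rw [hv]]
        push_cast [hv]
        ring_nf
      simp only [this]
      rw [← Real.exp_sum]
      congr 1
      rw [← hcsum]
      simp only [Finset.mul_sum, Finset.sum_div]
      exact Finset.sum_congr rfl fun p _ => by ring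
    exact chernoff_gauss P
      (by nlinarith [hX j, sq_nonneg σe]) (by positivity) hs_nonneg hmgf hint
  -- the bound on each tail probability in ℝ≥0∞
  have hexp_eq : Real.exp (-(s^2) / (2 * (σe^2 * (Kx * N))))
      = Real.exp (-t^2/2) * (G⁻¹ * G⁻¹) := by
    have h1 : -(s^2) / (2 * (σe^2 * (Kx * N))) = -r/2 := by
      rw [hs2]
      field_simp
    rw [h1, hr_def]
    have : -(t^2 + 4 * Real.log g)/2 = -t^2/2 + (-(Real.log g) + -(Real.log g)) := by ring
    rw [this, Real.exp_add, Real.exp_add, Real.exp_neg, Real.exp_log hGr]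
  have keyE : ∀ i j : Fin g,
      P {ω | s ≤ S i j ω} ≤ ENNReal.ofReal (Real.exp (-t^2/2) * (G⁻¹ * G⁻¹)) ∧
      P {ω | S i j ω ≤ -s} ≤ ENNReal.ofReal (Real.exp (-t^2/2) * (G⁻¹ * G⁻¹)) := by
    intro i j
    obtain ⟨h1, h2⟩ := key i j
    rw [hexp_eq] at h1 h2
    constructor
    · exact (ENNReal.le_ofReal_iff_toReal_le (measure_ne_top _ _) (by positivity)).mpr h1
    · exact (ENNReal.le_ofReal_iff_toReal_le (measure_ne_top _ _) (by positivity)).mpr h2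
  -- the good event
  set E : Set Ω := {ω | ∀ i j : Fin g, |S i j ω| ≤ s} with hE_def
  have hEmeas : MeasurableSet E := by
    have : E = ⋂ i : Fin g, ⋂ j : Fin g, {ω | |S i j ω| ≤ s} := by
      ext ω; simp [hE_def, Set.mem_iInter]
    rw [this]
    exact MeasurableSet.iInter fun i => MeasurableSet.iInter fun j =>
      measurableSet_le (hSmeas i j).abs measurable_const
  have hEc : P Eᶜ ≤ ENNReal.ofReal (2 * Real.exp (-t^2/2)) := by
    have hsub : Eᶜ ⊆ ⋃ i : Fin g, ⋃ j : Fin g,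
        ({ω | s ≤ S i j ω} ∪ {ω | S i j ω ≤ -s}) := by
      intro ω hω
      simp only [hE_def, Set.mem_compl_iff, Set.mem_setOf_eq, not_forall] at hω
      obtain ⟨i, j, hij⟩ := hω
      refine Set.mem_iUnion.mpr ⟨i, Set.mem_iUnion.mpr ⟨j, ?_⟩⟩
      rcases abs_cases (S i j ω) with ⟨habs, _⟩ | ⟨habs, _⟩
      · exact Or.inl (by simp only [Set.mem_setOf_eq]; linarith [lt_of_not_ge hij])
      · exact Or.inr (by simp only [Set.mem_setOf_eq]; linarith [lt_of_not_ge hij])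
    calc P Eᶜ ≤ P (⋃ i : Fin g, ⋃ j : Fin g,
          ({ω | s ≤ S i j ω} ∪ {ω | S i j ω ≤ -s})) := measure_mono hsub
      _ ≤ ∑ i : Fin g, P (⋃ j : Fin g, ({ω | s ≤ S i j ω} ∪ {ω | S i j ω ≤ -s})) :=
          measure_iUnion_fintype_le _ _
      _ ≤ ∑ i : Fin g, ∑ j : Fin g, P ({ω | s ≤ S i j ω} ∪ {ω | S i j ω ≤ -s}) :=
          Finset.sum_le_sum fun i _ => measure_iUnion_fintype_le _ _
      _ ≤ ∑ _i : Fin g, ∑ _j : Fin g,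
            (ENNReal.ofReal (Real.exp (-t^2/2) * (G⁻¹ * G⁻¹)) +
             ENNReal.ofReal (Real.exp (-t^2/2) * (G⁻¹ * G⁻¹))) := by
          refine Finset.sum_le_sum fun i _ => Finset.sum_le_sum fun j _ => ?_
          exact le_trans (measure_union_le _ _) (add_le_add (keyE i j).1 (keyE i j).2)
      _ = ENNReal.ofReal (2 * Real.exp (-t^2/2)) := by
          have hGne : G ≠ 0 := ne_of_gt hGr
          rw [Finset.sum_const, Finset.sum_const, Finset.card_univ, Fintype.card_fin,
            nsmul_eq_mul, nsmul_eq_mul, ← mul_assoc, ← ENNReal.ofReal_natCast g,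
            ← ENNReal.ofReal_mul (by positivity),
            ← ENNReal.ofReal_add (by positivity) (by positivity),
            ← ENNReal.ofReal_mul (by positivity)]
          congr 1
          field_simp
          ring
  have hPE : ENNReal.ofReal (1 - 2 * Real.exp (-t ^ 2 / 2)) ≤ P E := by
    have h1 : P E = 1 - P Eᶜ := by
      rw [← prob_compl_eq_one_sub hEmeas.compl, compl_compl]
    rw [h1]
    calc ENNReal.ofReal (1 - 2 * Real.exp (-t ^ 2 / 2))
        = ENNReal.ofReal 1 - ENNReal.ofReal (2 * Real.exp (-t ^ 2 / 2)) := by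
          rw [ENNReal.ofReal_sub _ (by positivity)]
      _ ≤ 1 - P Eᶜ := by
          rw [ENNReal.ofReal_one]
          exact tsub_le_tsub le_rfl (by simpa [neg_div] using hEc)
  -- transfer to the event with Z
  have hae : ∀ᵐ ω ∂P, ∀ p : Fin N × Fin g, Z ω p.1 p.2 = W p ω :=
    (MeasureTheory.ae_all_iff).mpr fun p => hWeq p
  have hEq : {ω | ∀ i j : Fin g, |((Z ω)ᵀ * X) i j| / N
      ≤ σe * Real.sqrt (Kx * (t ^ 2 + 4 * Real.log g) / N)} =ᵐ[P] E := by
    filter_upwards [hae] with ω hω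
    have hz : ∀ i j : Fin g, ((Z ω)ᵀ * X) i j = S i j ω := by
      intro i j
      rw [Matrix.mul_apply, hS_def]
      exact Finset.sum_congr rfl fun k _ => by
        rw [Matrix.transpose_apply, hω (k, i)]
    have hiff : ∀ i j : Fin g,
        (|((Z ω)ᵀ * X) i j| / N ≤ σe * Real.sqrt (Kx * (t ^ 2 + 4 * Real.log g) / N))
        ↔ |S i j ω| ≤ s := by
      intro i j
      rw [hz i j, div_le_iff₀ hNr, hs_def, hr_def]
      rw [mul_comm ((N:ℝ)) _]
    simp only [eq_iff_iff, Set.mem_setOf_eq, hE_def]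
    exact ⟨fun h i j => (hiff i j).mp (h i j), fun h i j => (hiff i j).mpr (h i j)⟩
  rw [measure_congr hEq]
  exact hPE
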